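/- For all d ≥ 3, any d-hitting family of permutations for the antichain on n elements (n ≥ d) has size at least (d / (2 log_2(d+1))) · log_2 n − O(1); more precisely, with r = ⌊(d−1)/2⌋, its size k satisfies (n − 1)_r ≤ (r + 1)^k, where (x)_r is the falling factorial. -/

import Mathlib

/-- A schedule for a partial order is a linear extension: a linear order
relation `r` that extends the partial order. -/
def IsSchedule {α : Type*} [PartialOrder α] (r : α → α → Prop) : Prop :=
  IsLinearOrder α r ∧ ∀ x y : α, x ≤ y → r x y

/-- A schedule `r` hits the tuple `a` if it orders `a 0, a 1, ...` in this order. -/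
def Hits {α : Type*} (r : α → α → Prop) {d : ℕ} (a : Fin d → α) : Prop :=
  ∀ i j : Fin d, i < j → r (a i) (a j)

/-- A `d`-tuple of distinct events is admissible if no later component is
strictly below an earlier one. -/
def Admissible {α : Type*} [PartialOrder α] {d : ℕ} (a : Fin d → α) : Prop :=
  Function.Injective a ∧ ∀ i j : Fin d, i < j → ¬ (a j < a i)

/-- A family of schedules (indexed by `Fin k`) is `d`-hitting if every member is a
schedule and every admissible `d`-tuple is hit by some member. -/
def IsHittingFamily {α : Type*} [PartialOrder α] {k : ℕ} (F : Fin k → (α → α → Prop)) (d : ℕ) : Prop :=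
  (∀ i, IsSchedule (F i)) ∧ ∀ a : Fin d → α, Admissible a → ∃ i, Hits (F i) a

/-- The antichain on `n` elements: `n` pairwise incomparable events. -/
def Antichain (n : ℕ) := Fin n

/-- The discrete partial order on the antichain: distinct elements are incomparable. -/
instance Antichain.instPartialOrder {n : ℕ} : PartialOrder (Antichain n) where
  le x y := x = y
  le_refl _ := rfl
  le_trans _ _ _ h1 h2 := Eq.trans h1 h2
  le_antisymm _ _ h _ := h

namespace AHLBaux

lemma sorted_eq {α : Type*} {R : α → α → Prop} (hanti : ∀ x y, R x y → R y x → x = y)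
    {m : ℕ} {a b : Fin m → α}
    (inja : Function.Injective a) (injb : Function.Injective b)
    (ha : ∀ i j : Fin m, i < j → R (a i) (a j))
    (hb : ∀ i j : Fin m, i < j → R (b i) (b j))
    (hab : ∀ i, ∃ j, a i = b j) (hba : ∀ i, ∃ j, b i = a j) :
    ∀ i, a i = b i := by
  suffices H : ∀ t : ℕ, ∀ i : Fin m, (i : ℕ) = t → a i = b i from fun i => H i i rfl
  intro t
  induction t using Nat.strong_induction_on with
  | _ t IH =>
    intro i hi
    subst hi
    obtain ⟨j1, h1⟩ := hab i
    obtain ⟨j2, h2⟩ := hba i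
    rcases lt_trichotomy j1 i with h | h | h
    · exfalso
      have e1 : a j1 = b j1 := IH (j1 : ℕ) h j1 rfl
      have : a i = a j1 := by rw [h1, ← e1]
      exact absurd (inja this) (Fin.ne_of_gt h)
    · rw [h1, h]
    · rcases lt_trichotomy j2 i with h' | h' | h'
      · exfalso
        have e2 : a j2 = b j2 := IH (j2 : ℕ) h' j2 rfl
        have : b i = b j2 := by rw [h2, e2]
        exact absurd (injb this) (Fin.ne_of_gt h')
      · rw [h2, h']
      · have r1 : R (b i) (a i) := by have := hb i j1 h; rwa [← h1] at this
        have r2 : R (a i) (b i) := by have := ha i j2 h'; rwa [← h2] at this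
        exact hanti _ _ r2 r1

lemma extend_inj {β : Type*} [Fintype β] [DecidableEq β] {m d : ℕ} (hm : m ≤ d)
    (hd : d ≤ Fintype.card β) (a : Fin m → β) (ha : Function.Injective a) :
    ∃ T : Fin d → β, Function.Injective T ∧ ∀ j : Fin m, T (Fin.castLE hm j) = a j := by
  classical
  set s : Finset β := Finset.univ \ Finset.image a Finset.univ with hs
  have himg : (Finset.image a Finset.univ).card = m := by
    rw [Finset.card_image_of_injective _ ha, Finset.card_univ, Fintype.card_fin]
  have hsub : Finset.image a Finset.univ ⊆ Finset.univ := Finset.subset_univ _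
  have hcard : d - m ≤ s.card := by
    have h1 : s.card = Fintype.card β - m := by
      rw [hs, Finset.card_sdiff_of_subset hsub, Finset.card_univ, himg]
    omega
  obtain ⟨g⟩ : Nonempty (Fin (d - m) ↪ {x // x ∈ s}) := by
    apply Function.Embedding.nonempty_of_card_le
    simpa [Fintype.card_coe] using hcard
  refine ⟨fun j => if h : (j : ℕ) < m then a ⟨j, h⟩ else (g ⟨(j : ℕ) - m, by
    have := j.isLt; omega⟩ : β), ?_, ?_⟩
  · intro x y hxy
    have hgs : ∀ t, ((g t : β)) ∈ s := fun t => (g t).2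
    have hgni : ∀ t, ((g t : β)) ∉ Finset.image a Finset.univ := fun t => by
      have := hgs t; rw [Finset.mem_sdiff] at this; exact this.2
    by_cases hx : (x : ℕ) < m <;> by_cases hy : (y : ℕ) < m
    · simp only [dif_pos hx, dif_pos hy] at hxy
      have := congrArg Fin.val (ha hxy)
      exact Fin.ext this
    · simp only [dif_pos hx, dif_neg hy] at hxy
      exact absurd (hxy ▸ Finset.mem_image_of_mem a (Finset.mem_univ _)) (hgni _)
    · simp only [dif_neg hx, dif_pos hy] at hxy
      exact absurd (hxy.symm ▸ Finset.mem_image_of_mem a (Finset.mem_univ _)) (hgni _)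
    · simp only [dif_neg hx, dif_neg hy] at hxy
      have h5 := congrArg Fin.val (g.injective (Subtype.ext hxy))
      simp only at h5
      have hx' := x.isLt
      have hy' := y.isLt
      exact Fin.ext (by omega)
  · intro j
    have hj : ((Fin.castLE hm j : Fin d) : ℕ) < m := j.isLt
    simp only [dif_pos hj]
    congr 1

lemma key_pow (d : ℕ) (hd : 3 ≤ d) :
    ((d - 1) / 2 + 1) ^ d ≤ (d + 1) ^ (2 * ((d - 1) / 2)) := by
  set r := (d - 1) / 2 with hr
  have h1 : 2 * r + 1 ≤ d := by omega
  have h2 : d ≤ 2 * r + 2 := by omega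
  have hrp : r + 1 ≤ 2 ^ r := (Nat.lt_two_pow_self (n := r))
  calc (r + 1) ^ d = (r + 1) ^ (2 * r) * (r + 1) ^ (d - 2 * r) := by
        rw [← pow_add]; congr 1; omega
    _ ≤ (r + 1) ^ (2 * r) * (2 ^ r) ^ 2 := by
        apply Nat.mul_le_mul_left
        calc (r + 1) ^ (d - 2 * r) ≤ (2 ^ r) ^ (d - 2 * r) :=
              Nat.pow_le_pow_left hrp _
          _ ≤ (2 ^ r) ^ 2 := Nat.pow_le_pow_right (Nat.one_le_two_pow) (by omega)
    _ = (2 * (r + 1)) ^ (2 * r) := by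
        rw [Nat.mul_pow, ← pow_mul]
        ring_nf
    _ ≤ (d + 1) ^ (2 * r) := Nat.pow_le_pow_left (by omega) _

instance instFintypeAntichain {n : ℕ} : Fintype (Antichain n) :=
  inferInstanceAs (Fintype (Fin n))

instance instDecidableEqAntichain {n : ℕ} : DecidableEq (Antichain n) :=
  inferInstanceAs (DecidableEq (Fin n))

lemma card_antichain (n : ℕ) : Fintype.card (Antichain n) = n := Fintype.card_fin n

lemma antichain_not_lt {n : ℕ} (x y : Antichain n) : ¬ x < y := by
  intro h
  obtain ⟨h1, h2⟩ := lt_iff_le_not_ge.mp h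
  exact h2 (show y = x from (show x = y from h1).symm)

/-- A `d`-hitting family also hits every shorter injective tuple. -/
lemma hits_short {n d k m : ℕ} {F : Fin k → (Antichain n → Antichain n → Prop)}
    (hF : IsHittingFamily F d) (hdn : d ≤ n) (hm : m ≤ d)
    (a : Fin m → Antichain n) (ha : Function.Injective a) :
    ∃ i, Hits (F i) a := by
  obtain ⟨T, hTinj, hTa⟩ := extend_inj hm (by rw [card_antichain]; exact hdn) a ha
  obtain ⟨i, hi⟩ := hF.2 T ⟨hTinj, fun p q _ => antichain_not_lt _ _⟩
  refine ⟨i, fun p q hpq => ?_⟩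
  have := hi (Fin.castLE hm p) (Fin.castLE hm q)
    (by rw [Fin.lt_def, Fin.coe_castLE, Fin.coe_castLE]; exact hpq)
  rwa [hTa p, hTa q] at this

/-- Part 1: the combinatorial counting bound. -/
lemma count_bound {d n k : ℕ} (hd : 3 ≤ d) (hn : d ≤ n)
    (F : Fin k → (Antichain n → Antichain n → Prop)) (hF : IsHittingFamily F d) :
    Nat.descFactorial (n - 1) ((d - 1) / 2) ≤ ((d - 1) / 2 + 1) ^ k := by
  classical
  set r := (d - 1) / 2 with hrdef
  have hr1 : 1 ≤ r := by omega
  have h2r : 2 * r + 1 ≤ d := by omega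
  have hn3 : 3 ≤ n := le_trans hd hn
  have hn1 : n - 1 < n := by omega
  let v : Fin n := ⟨n - 1, hn1⟩
  let e : Fin (n - 1) → Fin n := fun x => ⟨x.1, by have := x.isLt; omega⟩
  have einj : Function.Injective e := fun x y h => Fin.ext (congrArg (fun z : Fin n => z.val) h)
  have hea : ∀ a : Fin r ↪ Fin (n - 1), Function.Injective (fun j : Fin r => e (a j)) :=
    fun a x y h => a.injective (einj h)
  have hev : ∀ x, e x ≠ v := by
    intro x h
    have := congrArg Fin.val h
    simp only [e, v] at this
    have := x.isLt
    omega
  -- antisymmetry of each schedule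
  have hanti : ∀ i : Fin k, ∀ x y : Fin n, F i x y → F i y x → x = y := by
    intro i x y h1 h2
    have hlin : IsLinearOrder (Antichain n) (F i) := (hF.1 i).1
    exact hlin.toIsPartialOrder.toAntisymm.antisymm x y h1 h2
  -- counting map
  let cnt : (Fin r ↪ Fin (n - 1)) → Fin k → ℕ := fun a i =>
    (Finset.univ.filter fun j : Fin r => F i (e (a j)) v).card
  have hcnt_le : ∀ a i, cnt a i ≤ r := by
    intro a i
    calc cnt a i ≤ Finset.univ.card := Finset.card_filter_le _ _
      _ = r := by simp
  let φ : (Fin r ↪ Fin (n - 1)) → Fin k → Fin (r + 1) := fun a i =>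
    if Hits (F i) (fun j => e (a j)) then ⟨cnt a i, Nat.lt_succ_of_le (hcnt_le a i)⟩
    else ⟨0, Nat.succ_pos r⟩
  have hinj : Function.Injective φ := by
    intro a b hab
    by_contra hne
    set A : Finset (Fin n) := Finset.univ.image (fun j => e (a j)) with hA
    set B : Finset (Fin n) := Finset.univ.image (fun j => e (b j)) with hB
    set S : Finset (Fin n) := B \ A with hS
    have hBr : B.card = r := by
      rw [hB, Finset.card_image_of_injective _ (hea b)]
      simp
    have hAr : A.card = r := by
      rw [hA, Finset.card_image_of_injective _ (hea a)]
      simp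
    have hsr : S.card ≤ r := by
      calc S.card ≤ B.card := Finset.card_le_card Finset.sdiff_subset
        _ = r := hBr
    set s := S.card with hs
    have hm : r + 1 + s ≤ d := by omega
    let E : Fin s ≃ {x // x ∈ S} := S.equivFin.symm
    -- the test tuple
    let u : Fin (r + 1 + s) → Fin n := fun j =>
      if h : (j : ℕ) < r then e (a ⟨j, h⟩)
      else if h2 : (j : ℕ) = r then v
      else (E ⟨(j : ℕ) - (r + 1), by have := j.isLt; omega⟩ : Fin n)
    have hES : ∀ t, ((E t : Fin n)) ∈ S := fun t => (E t).2
    have hEB : ∀ t, ((E t : Fin n)) ∈ B := fun t => (Finset.mem_sdiff.mp (hES t)).1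
    have hEnA : ∀ t, ((E t : Fin n)) ∉ A := fun t => (Finset.mem_sdiff.mp (hES t)).2
    have hEnv : ∀ t, ((E t : Fin n)) ≠ v := by
      intro t h
      obtain ⟨j, _, hj⟩ := Finset.mem_image.mp (hEB t)
      exact hev (b j) (hj.trans h)
    have huinj : Function.Injective u := by
      intro x y hxy
      have haA : ∀ jj : Fin r, e (a jj) ∈ A := fun jj =>
        Finset.mem_image_of_mem _ (Finset.mem_univ jj)
      by_cases hx : (x : ℕ) < r <;> by_cases hy : (y : ℕ) < r
      · simp only [u, dif_pos hx, dif_pos hy] at hxy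
        have := a.injective (einj hxy)
        have := congrArg Fin.val this
        exact Fin.ext this
      · simp only [u, dif_pos hx, dif_neg hy] at hxy
        by_cases hy2 : (y : ℕ) = r
        · rw [dif_pos hy2] at hxy
          exact absurd hxy (hev _)
        · rw [dif_neg hy2] at hxy
          exact absurd (hxy ▸ haA _) (hEnA _)
      · simp only [u, dif_neg hx, dif_pos hy] at hxy
        by_cases hx2 : (x : ℕ) = r
        · rw [dif_pos hx2] at hxy
          exact absurd hxy.symm (hev _)
        · rw [dif_neg hx2] at hxy
          exact absurd (hxy.symm ▸ haA _) (hEnA _)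
      · simp only [u, dif_neg hx, dif_neg hy] at hxy
        by_cases hx2 : (x : ℕ) = r <;> by_cases hy2 : (y : ℕ) = r
        · exact Fin.ext (by omega)
        · rw [dif_pos hx2, dif_neg hy2] at hxy
          exact absurd hxy.symm (hEnv _)
        · rw [dif_neg hx2, dif_pos hy2] at hxy
          exact absurd hxy (hEnv _)
        · rw [dif_neg hx2, dif_neg hy2] at hxy
          have h5 := congrArg Fin.val (E.injective (Subtype.ext hxy))
          simp only at h5
          have hx' := x.isLt
          have hy' := y.isLt
          exact Fin.ext (by omega)
    obtain ⟨i, hi⟩ := hits_short hF hn hm u huinj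
    -- u-values
    have hur : ∀ jj : Fin r, u ⟨jj, by have := jj.isLt; omega⟩ = e (a jj) := by
      intro jj
      have h : ((⟨(jj : ℕ), by have := jj.isLt; omega⟩ : Fin (r + 1 + s)) : ℕ) < r := jj.isLt
      simp only [u, dif_pos h]
    have hrlt : r < r + 1 + s := by omega
    have huv : u ⟨r, hrlt⟩ = v := by
      have h1 : ¬ (((⟨r, hrlt⟩ : Fin (r + 1 + s)) : ℕ) < r) := lt_irrefl r
      have h2 : ((⟨r, hrlt⟩ : Fin (r + 1 + s)) : ℕ) = r := rfl
      simp only [u, dif_neg h1, dif_pos h2]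
      simp
    -- consequences of hitting u
    have ha_hit : Hits (F i) (fun j => e (a j)) := by
      intro p q hpq
      have := hi ⟨p, by have := p.isLt; omega⟩ ⟨q, by have := q.isLt; omega⟩
        (by rw [Fin.lt_def]; exact hpq)
      rwa [hur p, hur q] at this
    have hav : ∀ jj : Fin r, F i (e (a jj)) v := by
      intro jj
      have := hi ⟨jj, by have := jj.isLt; omega⟩ ⟨r, hrlt⟩
        (by rw [Fin.lt_def]; exact jj.isLt)
      rwa [hur jj, huv] at this
    have hvS : ∀ x, x ∈ S → F i v x := by
      intro x hx
      set t : Fin s := E.symm ⟨x, hx⟩ with ht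
      have htlt : r + 1 + (t : ℕ) < r + 1 + s := by have := t.isLt; omega
      have hu : u ⟨r + 1 + (t : ℕ), htlt⟩ = x := by
        have h1 : ¬ ((r + 1 + (t : ℕ)) < r) := by omega
        have h2 : ¬ ((r + 1 + (t : ℕ)) = r) := by omega
        simp only [u, dif_neg h1, dif_neg h2]
        have : (⟨r + 1 + (t : ℕ) - (r + 1), by have := t.isLt; omega⟩ : Fin s) = t :=
          Fin.ext (show r + 1 + (t : ℕ) - (r + 1) = (t : ℕ) by omega)
        rw [this, ht, Equiv.apply_symm_apply]
      have := hi ⟨r, hrlt⟩ ⟨r + 1 + (t : ℕ), htlt⟩ (by rw [Fin.lt_def]; show r < r + 1 + (t : ℕ); omega)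
      rwa [huv, hu] at this
    -- φ a i = r
    have hcnt_a : cnt a i = r := by
      have : (Finset.univ.filter fun j : Fin r => F i (e (a j)) v) = Finset.univ :=
        Finset.filter_true_of_mem (fun j _ => hav j)
      simp [cnt, this]
    have hfa : φ a i = ⟨r, Nat.lt_succ_self r⟩ := by
      simp only [φ, if_pos ha_hit]
      exact Fin.ext hcnt_a
    have hfb : φ b i = ⟨r, Nat.lt_succ_self r⟩ := (congrFun hab i).symm.trans hfa
    -- consequences for b
    have hb_hit : Hits (F i) (fun j => e (b j)) := by
      by_contra hbh
      have : φ b i = ⟨0, Nat.succ_pos r⟩ := by simp only [φ, if_neg hbh]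
      rw [hfb] at this
      have := congrArg Fin.val this
      simp only at this
      omega
    have hcnt_b : cnt b i = r := by
      have := hfb
      simp only [φ, if_pos hb_hit] at this
      exact congrArg Fin.val this
    have hbv : ∀ jj : Fin r, F i (e (b jj)) v := by
      have hfil : (Finset.univ.filter fun j : Fin r => F i (e (b j)) v) = Finset.univ :=
        Finset.eq_univ_of_card _ (by rw [Fintype.card_fin]; exact hcnt_b)
      intro jj
      have : jj ∈ Finset.univ.filter fun j : Fin r => F i (e (b j)) v := by
        rw [hfil]; exact Finset.mem_univ jj
      exact (Finset.mem_filter.mp this).2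
    -- S is empty, so B ⊆ A hence B = A
    have hSempty : S = ∅ := by
      by_contra hSne
      obtain ⟨x, hx⟩ := Finset.nonempty_iff_ne_empty.mpr hSne
      have h1 : F i v x := hvS x hx
      obtain ⟨j, _, hj⟩ := Finset.mem_image.mp (Finset.mem_sdiff.mp hx).1
      have h2 : F i x v := hj ▸ hbv j
      have hxv : x = v := hanti i x v h2 h1
      exact hev (b j) (hj.trans hxv)
    have hBA : B ⊆ A := Finset.sdiff_eq_empty_iff_subset.mp hSempty
    have hAB : A = B := (Finset.eq_of_subset_of_card_le hBA (by rw [hAr, hBr])).symm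
    -- both sorted enumerations of the same set
    have heq : ∀ j, e (a j) = e (b j) := by
      apply sorted_eq (hanti i) (hea a) (hea b) ha_hit hb_hit
      · intro j
        have : e (a j) ∈ B := by
          rw [← hAB]
          exact Finset.mem_image_of_mem _ (Finset.mem_univ j)
        obtain ⟨j', _, hj'⟩ := Finset.mem_image.mp this
        exact ⟨j', hj'.symm⟩
      · intro j
        have : e (b j) ∈ A := by
          rw [hAB]
          exact Finset.mem_image_of_mem _ (Finset.mem_univ j)
        obtain ⟨j', _, hj'⟩ := Finset.mem_image.mp this
        exact ⟨j', hj'.symm⟩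
    exact hne (Function.Embedding.ext fun j => einj (heq j))
  calc Nat.descFactorial (n - 1) r
      = Fintype.card (Fin r ↪ Fin (n - 1)) := by
        rw [Fintype.card_embedding_eq, Fintype.card_fin, Fintype.card_fin]
    _ ≤ Fintype.card (Fin k → Fin (r + 1)) := Fintype.card_le_of_injective φ hinj
    _ = (r + 1) ^ k := by simp [Fintype.card_fun]


/-- Part 2: the logarithmic consequence. -/
lemma log_bound (d : ℕ) (hd : 3 ≤ d) {n k : ℕ} (hn : d ≤ n)
    (h1 : Nat.descFactorial (n - 1) ((d - 1) / 2) ≤ ((d - 1) / 2 + 1) ^ k) :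
    (d : ℝ) / (2 * Real.logb 2 ((d : ℝ) + 1)) * Real.logb 2 (n : ℝ) - (d : ℝ) ≤ k := by
  set r := (d - 1) / 2 with hrdef
  have hr1 : 1 ≤ r := by omega
  have h2r : 2 * r + 1 ≤ d := by omega
  have hnat : (n - r) ^ r ≤ (r + 1) ^ k := by
    calc (n - r) ^ r = ((n - 1) + 1 - r) ^ r := by congr 1; omega
      _ ≤ Nat.descFactorial (n - 1) r := Nat.pow_sub_le_descFactorial _ _
      _ ≤ (r + 1) ^ k := h1
  have hnr : 2 * r ≤ n := by omega
  set N := Real.logb 2 (n : ℝ) with hN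
  set L := Real.logb 2 ((d : ℝ) + 1) with hL
  set M := Real.logb 2 ((r : ℝ) + 1) with hM
  have hrR : (1:ℝ) ≤ (r:ℝ) := by exact_mod_cast hr1
  have hdR : (3:ℝ) ≤ (d:ℝ) := by exact_mod_cast hd
  have hnR : (3:ℝ) ≤ (n:ℝ) := by exact_mod_cast le_trans hd hn
  have hM0 : 0 < M := Real.logb_pos one_lt_two (by linarith)
  have hL1 : 1 ≤ L := by
    have h := Real.logb_le_logb_of_le (b := 2) one_lt_two (x := 2) (by norm_num)
      (show (2:ℝ) ≤ (d:ℝ) + 1 by linarith)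
    rw [Real.logb_self_eq_one one_lt_two] at h
    rw [hL]; exact h
  have hN1 : 1 ≤ N := by
    have h := Real.logb_le_logb_of_le (b := 2) one_lt_two (x := 2) (by norm_num)
      (show (2:ℝ) ≤ (n:ℝ) by linarith)
    rw [Real.logb_self_eq_one one_lt_two] at h
    rw [hN]; exact h
  have f4 : (d : ℝ) * M ≤ 2 * (r:ℝ) * L := by
    have hkey := key_pow d hd
    have hc : (((r:ℝ) + 1)) ^ d ≤ (((d:ℝ) + 1)) ^ (2 * r) := by exact_mod_cast hkey
    have hlog := Real.logb_le_logb_of_le one_lt_two (by positivity) hc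
    rw [Real.logb_pow, Real.logb_pow] at hlog
    rw [hM, hL]
    push_cast at hlog ⊢
    linarith
  have hnrpos : (0:ℝ) < (n : ℝ) - (r:ℝ) := by
    have h2' : (2 * r : ℝ) ≤ (n:ℝ) := by exact_mod_cast hnr
    linarith
  have f5 : (r : ℝ) * Real.logb 2 ((n : ℝ) - (r:ℝ)) ≤ (k : ℝ) * M := by
    have hc : (((n:ℝ) - (r:ℝ))) ^ r ≤ (((r:ℝ)) + 1) ^ k := by
      have hrn : r ≤ n := by omega
      have hcast : ((n - r : ℕ) : ℝ) = (n:ℝ) - (r:ℝ) := by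
        push_cast [Nat.cast_sub hrn]; ring
      calc ((n:ℝ) - (r:ℝ)) ^ r = ((n - r : ℕ) : ℝ) ^ r := by rw [hcast]
        _ ≤ ((r + 1 : ℕ) : ℝ) ^ k := by exact_mod_cast hnat
        _ = ((r:ℝ) + 1) ^ k := by push_cast; ring
    have hlog := Real.logb_le_logb_of_le one_lt_two (by positivity) hc
    rw [Real.logb_pow, Real.logb_pow] at hlog
    rw [hM]
    linarith
  have f6 : N - 1 ≤ Real.logb 2 ((n:ℝ) - (r:ℝ)) := by
    have h2' : (2 * r : ℝ) ≤ (n:ℝ) := by exact_mod_cast hnr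
    have h2 : (n:ℝ) / 2 ≤ (n:ℝ) - (r:ℝ) := by linarith
    have hpos : (0:ℝ) < (n:ℝ)/2 := by linarith
    have hmono := Real.logb_le_logb_of_le one_lt_two hpos h2
    have hlog2 : Real.logb 2 ((n:ℝ)/2) = N - 1 := by
      rw [Real.logb_div (by linarith) (by norm_num),
        Real.logb_self_eq_one one_lt_two, hN]
    linarith
  have hd0 : (0:ℝ) ≤ (d:ℝ) := by linarith
  have hr0 : (0:ℝ) ≤ (r:ℝ) := by linarith
  have f7 : (r:ℝ) * (N - 1) ≤ (k:ℝ) * M := by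
    have := mul_le_mul_of_nonneg_left f6 hr0
    linarith
  have step2 : (d:ℝ) * (N - 1) ≤ 2 * L * k := by
    have s1 : (d:ℝ) * M * (N - 1) ≤ 2 * (r:ℝ) * L * (N - 1) :=
      mul_le_mul_of_nonneg_right f4 (by linarith)
    have s2 : 2 * L * ((r:ℝ) * (N - 1)) ≤ 2 * L * ((k:ℝ) * M) :=
      mul_le_mul_of_nonneg_left f7 (by linarith)
    have step1 : (d:ℝ) * (N - 1) * M ≤ (2 * L * (k:ℝ)) * M := by nlinarith [s1, s2]
    exact le_of_mul_le_mul_right step1 hM0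
  have hL0 : (0:ℝ) < 2 * L := by linarith
  rw [div_mul_eq_mul_div, sub_le_iff_le_add, div_le_iff₀ hL0]
  nlinarith [step2, mul_nonneg hd0 (show (0:ℝ) ≤ 2*L - 1 by linarith)]

end AHLBaux

/-- for `d ≥ 3`, every `d`-hitting family for the antichain on `n ≥ d`
elements has size `k` satisfying `(n−1)_r ≤ (r+1)^k` where `r = ⌊(d−1)/2⌋` and
`(x)_r` is the falling factorial; consequently
`k ≥ (d / (2 log₂(d+1))) · log₂ n − O(1)` where the `O(1)` constant depends only on `d`. -/
theorem antichain_hitting_lower_bound (d : ℕ) (hd : 3 ≤ d) :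
    ∃ C : ℝ, ∀ (n k : ℕ), d ≤ n →
      ∀ F : Fin k → (Antichain n → Antichain n → Prop), IsHittingFamily F d →
        Nat.descFactorial (n - 1) ((d - 1) / 2) ≤ ((d - 1) / 2 + 1) ^ k ∧
        (d : ℝ) / (2 * Real.logb 2 ((d : ℝ) + 1)) * Real.logb 2 (n : ℝ) - C ≤ k := by
  refine ⟨(d : ℝ), ?_⟩
  intro n k hn F hF
  have h1 := AHLBaux.count_bound hd hn F hF
  exact ⟨h1, AHLBaux.log_bound d hd hn h1⟩
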